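/- Under the nested-models setup, the conditional risk of the GLS model averaging estimator satisfies R*(w) = Σ_{m=1}^{M} Σ_{l=1}^{M} w_m w_l [ μ' Σ^{-1/2} (I − P_{max{m,l}}) Σ^{-1/2} μ + min{k_m, k_l} ] for every weight vector w with nonnegative entries summing to 1. -/

import Mathlib

open Matrix
set_option linter.unusedSectionVars false

lemma aux_posdef {n k : ℕ} {A : Matrix (Fin n) (Fin n) ℝ} (hA : A.PosDef)
    (X : Matrix (Fin n) (Fin k) ℝ)
    (hX : LinearIndependent ℝ (fun j : Fin k => fun i : Fin n => X i j)) :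
    (Xᵀ * A * X).PosDef := by
  have hAh := hA.isHermitian
  refine Matrix.PosDef.of_dotProduct_mulVec_pos ?_ ?_
  · have h1 : Xᵀᴴ = X := by ext i j; simp [Matrix.conjTranspose_apply]
    have h2 : Xᴴ = Xᵀ := by ext i j; simp [Matrix.conjTranspose_apply]
    unfold Matrix.IsHermitian at *
    rw [conjTranspose_mul, conjTranspose_mul, hAh, h1, h2, Matrix.mul_assoc]
  · intro x hx
    have hXx : X *ᵥ x ≠ 0 := by
      intro h
      apply hx
      have := Fintype.linearIndependent_iff.mp hX x ?_
      · funext j; exact this j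
      · funext i
        have := congrFun h i
        simpa [Matrix.mulVec, dotProduct, mul_comm, Finset.sum_apply] using this
    have := hA.dotProduct_mulVec_pos hXx
    rw [← Matrix.mulVec_mulVec, ← Matrix.mulVec_mulVec]
    rw [show (star x : Fin k → ℝ) = x from star_trivial x]
    rw [dotProduct_mulVec, Matrix.vecMul_transpose]
    rw [show (star (X *ᵥ x) : Fin n → ℝ) = X *ᵥ x from star_trivial _] at this
    exact this

section Core
variable {n M : ℕ}
  (Sg S : Matrix (Fin n) (Fin n) ℝ)
  (hSg : Sg.PosDef) (hS : S.PosDef) (hSS : S * S = Sg)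
  (k : Fin M → ℕ) (hk : StrictMono k)
  (X : (m : Fin M) → Matrix (Fin n) (Fin (k m)) ℝ)
  (hnest : ∀ (m l : Fin M) (h : m ≤ l) (i : Fin n) (j : Fin (k m)),
    X m i j = X l i (Fin.castLE (hk.monotone h) j))
  (hX : ∀ m, LinearIndependent ℝ (fun j : Fin (k m) => fun i : Fin n => X m i j))

-- notation
noncomputable def Qm (m : Fin M) : Matrix (Fin n) (Fin n) ℝ :=
  S⁻¹ * X m * ((X m)ᵀ * Sg⁻¹ * X m)⁻¹ * (X m)ᵀ * S⁻¹

example : True := trivial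

include hSg hX in
lemma hGunit (m : Fin M) : IsUnit ((X m)ᵀ * Sg⁻¹ * X m).det :=
  ((aux_posdef hSg.inv (X m) (hX m)).isUnit).map detMonoidHom

include hS hSS in
lemma hSgi : Sg⁻¹ = S⁻¹ * S⁻¹ := by
  rw [← hSS, Matrix.mul_inv_rev]

include hS in
lemma hSsymm : Sᵀ = S := by
  ext i j
  have := hS.isHermitian.apply i j
  simpa using this

include hS in
lemma hSisymm : (S⁻¹)ᵀ = S⁻¹ := by
  rw [Matrix.transpose_nonsing_inv, hSsymm S hS]

include hSg in
lemma hSgT : Sgᵀ = Sg := by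
  ext i j
  have := hSg.isHermitian.apply i j
  simpa using this

include hSg in
lemma hSgsymm : Sg⁻¹ᵀ = Sg⁻¹ := by
  rw [Matrix.transpose_nonsing_inv, hSgT Sg hSg]

include hSg hS in
lemma hGsymm (m : Fin M) : ((X m)ᵀ * Sg⁻¹ * X m)ᵀ = (X m)ᵀ * Sg⁻¹ * X m := by
  rw [Matrix.transpose_mul, Matrix.transpose_mul, Matrix.transpose_transpose,
    hSgsymm Sg hSg, Matrix.mul_assoc]

include hSg hS hX in
lemma hQsymm (m : Fin M) : (Qm Sg S k X m)ᵀ = Qm Sg S k X m := by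
  unfold Qm
  simp only [Matrix.transpose_mul, Matrix.transpose_transpose,
    Matrix.transpose_nonsing_inv, hSgT Sg hSg, hSisymm S hS, Matrix.mul_assoc]


include hnest in
lemma hXE (m l : Fin M) (h : m ≤ l) :
    X m = X l * Matrix.of (fun (i : Fin (k l)) (j : Fin (k m)) =>
      if i = Fin.castLE (hk.monotone h) j then (1:ℝ) else 0) := by
  ext i j
  rw [Matrix.mul_apply]
  rw [Finset.sum_eq_single (Fin.castLE (hk.monotone h) j)]
  · simp [hnest m l h i j]
  · intro b _ hb; simp [hb]
  · intro hmem; exact absurd (Finset.mem_univ _) hmem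

include hSg hS hSS hnest hX in
lemma hQQ (m l : Fin M) (h : m ≤ l) :
    Qm Sg S k X l * Qm Sg S k X m = Qm Sg S k X m := by
  set E : Matrix (Fin (k l)) (Fin (k m)) ℝ :=
    Matrix.of (fun i j => if i = Fin.castLE (hk.monotone h) j then (1:ℝ) else 0) with hE
  have hXm : X m = X l * E := hXE k hk X hnest m l h
  have hGE : (X l)ᵀ * Sg⁻¹ * X m = ((X l)ᵀ * Sg⁻¹ * X l) * E := by
    rw [hXm, Matrix.mul_assoc ((X l)ᵀ * Sg⁻¹)]
  have hGlinv : ((X l)ᵀ * Sg⁻¹ * X l)⁻¹ * ((X l)ᵀ * Sg⁻¹ * X l) = 1 :=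
    Matrix.nonsing_inv_mul _ (hGunit Sg hSg k X hX l)
  unfold Qm
  calc S⁻¹ * X l * ((X l)ᵀ * Sg⁻¹ * X l)⁻¹ * (X l)ᵀ * S⁻¹ *
        (S⁻¹ * X m * ((X m)ᵀ * Sg⁻¹ * X m)⁻¹ * (X m)ᵀ * S⁻¹)
      = S⁻¹ * X l * (((X l)ᵀ * Sg⁻¹ * X l)⁻¹ * (((X l)ᵀ * (S⁻¹ * (S⁻¹ * X m))) *
          (((X m)ᵀ * Sg⁻¹ * X m)⁻¹ * ((X m)ᵀ * S⁻¹)))) := by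
        simp only [Matrix.mul_assoc]
    _ = S⁻¹ * X l * (((X l)ᵀ * Sg⁻¹ * X l)⁻¹ * ((((X l)ᵀ * Sg⁻¹ * X l) * E) *
          (((X m)ᵀ * Sg⁻¹ * X m)⁻¹ * ((X m)ᵀ * S⁻¹)))) := by
        rw [← hGE]
        rw [show (X l)ᵀ * (S⁻¹ * (S⁻¹ * X m)) = (X l)ᵀ * Sg⁻¹ * X m by
          rw [hSgi Sg S hS hSS]; simp only [Matrix.mul_assoc]]
    _ = S⁻¹ * (X l * (E * (((X m)ᵀ * Sg⁻¹ * X m)⁻¹ * ((X m)ᵀ * S⁻¹)))) := by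
        rw [show ((X l)ᵀ * Sg⁻¹ * X l)⁻¹ * ((((X l)ᵀ * Sg⁻¹ * X l) * E) *
            (((X m)ᵀ * Sg⁻¹ * X m)⁻¹ * ((X m)ᵀ * S⁻¹)))
          = (((X l)ᵀ * Sg⁻¹ * X l)⁻¹ * ((X l)ᵀ * Sg⁻¹ * X l)) * (E *
            (((X m)ᵀ * Sg⁻¹ * X m)⁻¹ * ((X m)ᵀ * S⁻¹))) by simp only [Matrix.mul_assoc]]
        rw [hGlinv, Matrix.one_mul]
        simp only [Matrix.mul_assoc]
    _ = S⁻¹ * X m * ((X m)ᵀ * Sg⁻¹ * X m)⁻¹ * (X m)ᵀ * S⁻¹ := by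
        rw [show X l * (E * (((X m)ᵀ * Sg⁻¹ * X m)⁻¹ * ((X m)ᵀ * S⁻¹)))
          = (X l * E) * (((X m)ᵀ * Sg⁻¹ * X m)⁻¹ * ((X m)ᵀ * S⁻¹)) by
            simp only [Matrix.mul_assoc]]
        rw [← hXm]
        simp only [Matrix.mul_assoc]

include hSg hS hSS hnest hX in
lemma hQmul (m l : Fin M) :
    Qm Sg S k X m * Qm Sg S k X l = Qm Sg S k X (min m l) := by
  rcases le_total m l with h | h
  · rw [min_eq_left h]
    have h1 := hQQ Sg S hSg hS hSS k hk X hnest hX m l h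
    have h2 := congrArg Matrix.transpose h1
    rw [Matrix.transpose_mul, hQsymm Sg S hSg hS k X hX m,
      hQsymm Sg S hSg hS k X hX l] at h2
    exact h2
  · rw [min_eq_right h]
    exact hQQ Sg S hSg hS hSS k hk X hnest hX l m h

include hSg hS hSS hX in
lemma hQtrace (m : Fin M) : (Qm Sg S k X m).trace = (k m : ℝ) := by
  unfold Qm
  simp only [Matrix.mul_assoc]
  rw [Matrix.trace_mul_comm]
  simp only [Matrix.mul_assoc]
  rw [Matrix.trace_mul_comm]
  simp only [Matrix.mul_assoc]
  rw [show (X m)ᵀ * (S⁻¹ * (S⁻¹ * X m)) = (X m)ᵀ * Sg⁻¹ * X m from by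
    rw [hSgi Sg S hS hSS]; simp only [Matrix.mul_assoc]]
  rw [show (X m)ᵀ * (Sg⁻¹ * X m) = (X m)ᵀ * Sg⁻¹ * X m from (Matrix.mul_assoc _ _ _).symm]
  rw [Matrix.nonsing_inv_mul _ (hGunit Sg hSg k X hX m)]
  simp


include hS in
lemma hSdet : IsUnit S.det := isUnit_iff_ne_zero.mpr hS.det_pos.ne'

include hS in
lemma hS1 : S * S⁻¹ = 1 := Matrix.mul_nonsing_inv S (hSdet S hS)

include hS in
lemma hS2 : S⁻¹ * S = 1 := Matrix.nonsing_inv_mul S (hSdet S hS)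

include hSg hS hSS hX in
lemma hAm (m : Fin M) :
    X m * ((X m)ᵀ * Sg⁻¹ * X m)⁻¹ * (X m)ᵀ * Sg⁻¹ = S * Qm Sg S k X m * S⁻¹ := by
  unfold Qm
  rw [hSgi Sg S hS hSS]
  simp only [← Matrix.mul_assoc]
  rw [hS1 S hS, Matrix.one_mul]

include hSg hS hSS in
lemma conj_quad (R : Matrix (Fin n) (Fin n) ℝ) (hR : Rᵀ = R) :
    (S * R * S⁻¹)ᵀ * Sg⁻¹ * (S * R * S⁻¹) = S⁻¹ * (R * R) * S⁻¹ := by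
  simp only [Matrix.transpose_mul]
  rw [hSisymm S hS, hSsymm S hS, hR, hSgi Sg S hS hSS]
  simp only [Matrix.mul_assoc]
  rw [show S⁻¹ * (S * (R * S⁻¹)) = R * S⁻¹ from by
    rw [← Matrix.mul_assoc, hS2 S hS, Matrix.one_mul]]
  rw [show S * (S⁻¹ * (R * S⁻¹)) = R * S⁻¹ from by
    rw [← Matrix.mul_assoc, hS1 S hS, Matrix.one_mul]]

include hSg hS hSS hX in
lemma hPstarQ (w : Fin M → ℝ) :
    (∑ m, w m • (X m * ((X m)ᵀ * Sg⁻¹ * X m)⁻¹ * (X m)ᵀ * Sg⁻¹))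
      = S * (∑ m, w m • Qm Sg S k X m) * S⁻¹ := by
  rw [Matrix.mul_sum, Matrix.sum_mul]
  refine Finset.sum_congr rfl fun m _ => ?_
  rw [hAm Sg S hSg hS hSS k X hX m, mul_smul_comm, smul_mul_assoc]

include hSg hS hX in
lemma hQwT (w : Fin M → ℝ) :
    (∑ m, w m • Qm Sg S k X m)ᵀ = ∑ m, w m • Qm Sg S k X m := by
  rw [Matrix.transpose_sum]
  refine Finset.sum_congr rfl fun m _ => ?_
  rw [Matrix.transpose_smul, hQsymm Sg S hSg hS k X hX m]

include hSg hS hSS hnest hX in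
lemma key_prod (m l : Fin M) :
    (Qm Sg S k X m - 1) * (Qm Sg S k X l - 1) = 1 - Qm Sg S k X (max m l) := by
  have hmul := hQmul Sg S hSg hS hSS k hk X hnest hX m l
  rcases le_total m l with h | h
  · rw [max_eq_right h]; rw [min_eq_left h] at hmul
    rw [Matrix.sub_mul, Matrix.mul_sub, Matrix.mul_sub, hmul]
    simp only [Matrix.one_mul, Matrix.mul_one]
    abel
  · rw [max_eq_left h]; rw [min_eq_right h] at hmul
    rw [Matrix.sub_mul, Matrix.mul_sub, Matrix.mul_sub, hmul]
    simp only [Matrix.one_mul, Matrix.mul_one]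
    abel

include hSg hS hSS hnest hX in
lemma hCmat (w : Fin M → ℝ) (hw1 : ∑ m, w m = 1) :
    ((∑ m, w m • (X m * ((X m)ᵀ * Sg⁻¹ * X m)⁻¹ * (X m)ᵀ * Sg⁻¹)) - 1)ᵀ * Sg⁻¹ *
      ((∑ m, w m • (X m * ((X m)ᵀ * Sg⁻¹ * X m)⁻¹ * (X m)ᵀ * Sg⁻¹)) - 1)
    = ∑ m, ∑ l, (w m * w l) • (S⁻¹ * (1 - Qm Sg S k X (max m l)) * S⁻¹) := by
  set Qw := ∑ m, w m • Qm Sg S k X m with hQw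
  have h1 : (∑ m, w m • (X m * ((X m)ᵀ * Sg⁻¹ * X m)⁻¹ * (X m)ᵀ * Sg⁻¹)) - 1
      = S * (Qw - 1) * S⁻¹ := by
    rw [hPstarQ Sg S hSg hS hSS k X hX w, Matrix.mul_sub, Matrix.sub_mul,
      Matrix.mul_one, hS1 S hS]
  have hT : (Qw - 1)ᵀ = Qw - 1 := by
    rw [Matrix.transpose_sub, Matrix.transpose_one, hQwT Sg S hSg hS k X hX w]
  rw [h1, conj_quad Sg S hSg hS hSS _ hT]
  have h2 : Qw - 1 = ∑ m, w m • (Qm Sg S k X m - 1) := by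
    calc Qw - 1 = ∑ m, w m • Qm Sg S k X m - (∑ m, w m) • (1 : Matrix (Fin n) (Fin n) ℝ) := by
          rw [hw1, one_smul]
      _ = ∑ m, (w m • Qm Sg S k X m - w m • (1 : Matrix (Fin n) (Fin n) ℝ)) := by
          rw [Finset.sum_smul, ← Finset.sum_sub_distrib]
      _ = ∑ m, w m • (Qm Sg S k X m - 1) := by
          simp [smul_sub]
  rw [h2, Finset.sum_mul_sum]
  rw [Matrix.mul_sum, Matrix.sum_mul]
  refine Finset.sum_congr rfl fun m _ => ?_
  rw [Matrix.mul_sum, Matrix.sum_mul]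
  refine Finset.sum_congr rfl fun l _ => ?_
  simp only [mul_smul_comm, smul_mul_assoc, smul_smul]
  rw [key_prod Sg S hSg hS hSS k hk X hnest hX m l, mul_comm (w l) (w m)]

include hSg hS hSS hnest hX in
lemma hTrmat (w : Fin M → ℝ) :
    (((∑ m, w m • (X m * ((X m)ᵀ * Sg⁻¹ * X m)⁻¹ * (X m)ᵀ * Sg⁻¹))ᵀ * Sg⁻¹ *
      (∑ m, w m • (X m * ((X m)ᵀ * Sg⁻¹ * X m)⁻¹ * (X m)ᵀ * Sg⁻¹))) * Sgᵀ).trace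
    = ∑ m, ∑ l, (w m * w l) * min (k m : ℝ) (k l : ℝ) := by
  set Qw := ∑ m, w m • Qm Sg S k X m with hQw
  rw [hPstarQ Sg S hSg hS hSS k X hX w,
    conj_quad Sg S hSg hS hSS _ (hQwT Sg S hSg hS k X hX w), hSgT Sg hSg]
  have h3 : S⁻¹ * (Qw * Qw) * S⁻¹ * Sg = S⁻¹ * ((Qw * Qw) * S) := by
    rw [← hSS]
    simp only [Matrix.mul_assoc]
    rw [show S⁻¹ * (S * S) = S from by rw [← Matrix.mul_assoc, hS2 S hS, Matrix.one_mul]]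
  rw [h3, Matrix.trace_mul_comm, Matrix.mul_assoc,
    show S * S⁻¹ = 1 from hS1 S hS, Matrix.mul_one]
  rw [hQw, Finset.sum_mul_sum]
  rw [Matrix.trace_sum]
  refine Finset.sum_congr rfl fun m _ => ?_
  rw [Matrix.trace_sum]
  refine Finset.sum_congr rfl fun l _ => ?_
  rw [smul_mul_assoc, mul_smul_comm, smul_smul, Matrix.trace_smul,
    hQmul Sg S hSg hS hSS k hk X hnest hX m l,
    hQtrace Sg S hSg hS hSS k X hX (min m l)]
  rcases le_total m l with h | h
  · rw [min_eq_left h, min_eq_left (by exact_mod_cast Nat.cast_le.mpr (hk.monotone h))]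
    simp [smul_eq_mul]
  · rw [min_eq_right h, min_eq_right (by exact_mod_cast Nat.cast_le.mpr (hk.monotone h))]
    simp [smul_eq_mul]

end Core


lemma dp_move {n k : ℕ} (M : Matrix (Fin n) (Fin k) ℝ) (x : Fin k → ℝ) (y : Fin n → ℝ) :
    (M *ᵥ x) ⬝ᵥ y = x ⬝ᵥ (Mᵀ *ᵥ y) := by
  rw [dotProduct_mulVec, Matrix.vecMul_transpose]

lemma loss_expand {n : ℕ} (A Pm : Matrix (Fin n) (Fin n) ℝ) (mu f : Fin n → ℝ) :
    (Pm *ᵥ (mu + f) - mu) ⬝ᵥ (A *ᵥ (Pm *ᵥ (mu + f) - mu))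
    = mu ⬝ᵥ (((Pm - 1)ᵀ * A * (Pm - 1)) *ᵥ mu)
      + (∑ i, ((Pmᵀ * Aᵀ * (Pm - 1) + Pmᵀ * A * (Pm - 1)) *ᵥ mu) i * f i)
      + ∑ i, ∑ j, (Pmᵀ * A * Pm) i j * (f i * f j) := by
  have hb : Pm *ᵥ (mu + f) - mu = (Pm - 1) *ᵥ mu + Pm *ᵥ f := by
    rw [Matrix.mulVec_add, Matrix.sub_mulVec, Matrix.one_mulVec]
    abel
  rw [hb]
  set b := (Pm - 1) *ᵥ mu with hbdef
  set g := Pm *ᵥ f with hgdef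
  rw [Matrix.mulVec_add, dotProduct_add, add_dotProduct,
    add_dotProduct]
  have t1 : b ⬝ᵥ (A *ᵥ b) = mu ⬝ᵥ (((Pm - 1)ᵀ * A * (Pm - 1)) *ᵥ mu) := by
    rw [hbdef, dp_move, Matrix.mulVec_mulVec, Matrix.mulVec_mulVec]
  have t2 : b ⬝ᵥ (A *ᵥ g) = ((Pmᵀ * Aᵀ * (Pm - 1)) *ᵥ mu) ⬝ᵥ f := by
    rw [hbdef, hgdef]
    calc ((Pm - 1) *ᵥ mu) ⬝ᵥ (A *ᵥ (Pm *ᵥ f))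
        = ((Pm - 1) *ᵥ mu) ⬝ᵥ ((A * Pm) *ᵥ f) := by rw [Matrix.mulVec_mulVec]
      _ = ((A * Pm)ᵀ *ᵥ ((Pm - 1) *ᵥ mu)) ⬝ᵥ f := by
            rw [dp_move ((A * Pm)ᵀ), Matrix.transpose_transpose]
      _ = ((Pmᵀ * Aᵀ * (Pm - 1)) *ᵥ mu) ⬝ᵥ f := by
            rw [Matrix.mulVec_mulVec, Matrix.transpose_mul]
  have t3 : g ⬝ᵥ (A *ᵥ b) = ((Pmᵀ * A * (Pm - 1)) *ᵥ mu) ⬝ᵥ f := by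
    rw [hgdef, hbdef, dp_move, Matrix.mulVec_mulVec, Matrix.mulVec_mulVec,
      dotProduct_comm, dp_move]
  have t4 : g ⬝ᵥ (A *ᵥ g) = ∑ i, ∑ j, (Pmᵀ * A * Pm) i j * (f i * f j) := by
    rw [hgdef, dp_move, Matrix.mulVec_mulVec, Matrix.mulVec_mulVec]
    simp only [Matrix.mul_assoc]
    simp only [dotProduct, Matrix.mulVec, Finset.mul_sum]
    exact Finset.sum_congr rfl fun i _ => Finset.sum_congr rfl fun j _ => by ring
  rw [t1, t2, t3, t4, Matrix.add_mulVec]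
  simp only [dotProduct, Pi.add_apply, add_mul, Finset.sum_add_distrib]
  ring


lemma dp_sum {n : ℕ} {ι : Type*} (s : Finset ι) (f : ι → Matrix (Fin n) (Fin n) ℝ)
    (x y : Fin n → ℝ) :
    x ⬝ᵥ ((∑ i ∈ s, f i) *ᵥ y) = ∑ i ∈ s, x ⬝ᵥ (f i *ᵥ y) := by
  classical
  induction s using Finset.induction_on with
  | empty => simp [dotProduct]
  | insert _ _ h ih =>
      rw [Finset.sum_insert h, Finset.sum_insert h, Matrix.add_mulVec,
        dotProduct_add, ih]


open MeasureTheory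

lemma tr_form {n : ℕ} (B C : Matrix (Fin n) (Fin n) ℝ) :
    ∑ i, ∑ j, B i j * C i j = (B * Cᵀ).trace := by
  simp [Matrix.trace, Matrix.mul_apply, Matrix.diag]

/-- Lemma 1: Under the nested-models setup `Y = μ + e`, `E[e] = 0`,
`Cov(e) = Sg` positive definite (square root `S`), with nested designs `X m` of
strictly increasing ranks `k m`, GLS projections
`P*(w) = ∑ m, w m • X m (X mᵀ Sg⁻¹ X m)⁻¹ X mᵀ Sg⁻¹` and
`P m = S⁻¹ X m (X mᵀ Sg⁻¹ X m)⁻¹ X mᵀ S⁻¹`, the risk of the averaging estimator is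
`R*(w) = ∑ m ∑ l, w m w l [ μᵀ S⁻¹ (I − P (max m l)) S⁻¹ μ + min (k m) (k l) ]`
for every weight vector `w` in the simplex. -/
theorem stmt4 {n M : ℕ} {Ω : Type*} [MeasurableSpace Ω] (P : Measure Ω)
    [IsProbabilityMeasure P]
    (Sg S : Matrix (Fin n) (Fin n) ℝ)
    (hSg : Sg.PosDef) (hS : S.PosDef) (hSS : S * S = Sg)
    (k : Fin M → ℕ) (hk : StrictMono k)
    (X : (m : Fin M) → Matrix (Fin n) (Fin (k m)) ℝ)
    (hnest : ∀ (m l : Fin M) (h : m ≤ l) (i : Fin n) (j : Fin (k m)),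
      X m i j = X l i (Fin.castLE (hk.monotone h) j))
    (hX : ∀ m, LinearIndependent ℝ (fun j : Fin (k m) => fun i : Fin n => X m i j))
    (mu : Fin n → ℝ) (e : Ω → Fin n → ℝ)
    (hmeanInt : ∀ i, Integrable (fun ω => e ω i) P)
    (hmean : ∀ i, ∫ ω, e ω i ∂P = 0)
    (hcovInt : ∀ i j, Integrable (fun ω => e ω i * e ω j) P)
    (hcov : ∀ i j, ∫ ω, e ω i * e ω j ∂P = Sg i j)
    (w : Fin M → ℝ) (hw0 : ∀ m, 0 ≤ w m) (hw1 : ∑ m, w m = 1) :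
    let Pstar : Matrix (Fin n) (Fin n) ℝ :=
      ∑ m, w m • (X m * ((X m)ᵀ * Sg⁻¹ * X m)⁻¹ * (X m)ᵀ * Sg⁻¹)
    let Pj : Fin M → Matrix (Fin n) (Fin n) ℝ :=
      fun m => S⁻¹ * X m * ((X m)ᵀ * Sg⁻¹ * X m)⁻¹ * (X m)ᵀ * S⁻¹
    ∫ ω, dotProduct (Pstar.mulVec (mu + e ω) - mu)
        (Sg⁻¹.mulVec (Pstar.mulVec (mu + e ω) - mu)) ∂P
      = ∑ m, ∑ l, w m * w l *
          (dotProduct mu ((S⁻¹ * (1 - Pj (max m l)) * S⁻¹).mulVec mu)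
            + (min (k m) (k l) : ℝ)) := by
  intro Pstar Pj
  have hPdef : Pstar = ∑ m, w m • (X m * ((X m)ᵀ * Sg⁻¹ * X m)⁻¹ * (X m)ᵀ * Sg⁻¹) := rfl
  have hPjQ : Pj = Qm Sg S k X := rfl
  set cc : ℝ := mu ⬝ᵥ (((Pstar - 1)ᵀ * Sg⁻¹ * (Pstar - 1)) *ᵥ mu) with hcc
  set u : Fin n → ℝ :=
    (Pstarᵀ * Sg⁻¹ᵀ * (Pstar - 1) + Pstarᵀ * Sg⁻¹ * (Pstar - 1)) *ᵥ mu with hu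
  set B : Matrix (Fin n) (Fin n) ℝ := Pstarᵀ * Sg⁻¹ * Pstar with hB
  have hpt : (fun ω => dotProduct (Pstar.mulVec (mu + e ω) - mu)
        (Sg⁻¹.mulVec (Pstar.mulVec (mu + e ω) - mu)))
      = fun ω => cc + (∑ i, u i * e ω i) + ∑ i, ∑ j, B i j * (e ω i * e ω j) := by
    funext ω
    exact loss_expand Sg⁻¹ Pstar mu (e ω)
  rw [hpt]
  have hint1 : Integrable (fun ω => ∑ i, u i * e ω i) P :=
    integrable_finset_sum _ fun i _ => (hmeanInt i).const_mul (u i)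
  have hint2 : Integrable (fun ω => ∑ i, ∑ j, B i j * (e ω i * e ω j)) P :=
    integrable_finset_sum _ fun i _ =>
      integrable_finset_sum _ fun j _ => (hcovInt i j).const_mul (B i j)
  rw [integral_add (f := fun ω => cc + ∑ i, u i * e ω i)
    (g := fun ω => ∑ i, ∑ j, B i j * (e ω i * e ω j))
    ((integrable_const cc).add hint1) hint2]
  rw [integral_add (f := fun _ => cc) (g := fun ω => ∑ i, u i * e ω i)
    (integrable_const cc) hint1, integral_const]
  rw [integral_finset_sum _ fun i _ => (hmeanInt i).const_mul (u i)]
  rw [integral_finset_sum _ fun i _ =>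
    integrable_finset_sum _ fun j _ => (hcovInt i j).const_mul (B i j)]
  simp only [integral_const_mul, hmean, mul_zero, Finset.sum_const_zero, add_zero]
  have hq : ∀ i, ∫ ω, ∑ j, B i j * (e ω i * e ω j) ∂P = ∑ j, B i j * Sg i j := by
    intro i
    rw [integral_finset_sum _ fun j _ => (hcovInt i j).const_mul (B i j)]
    simp only [integral_const_mul, hcov]
  simp only [hq]
  simp only [measure_univ, probReal_univ, one_smul]
  -- now the deterministic identity
  have hc2 : cc = ∑ m, ∑ l, w m * w l *
      (mu ⬝ᵥ ((S⁻¹ * (1 - Pj (max m l)) * S⁻¹) *ᵥ mu)) := by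
    rw [hcc, hPdef, hCmat Sg S hSg hS hSS k hk X hnest hX w hw1]
    rw [dp_sum]
    refine Finset.sum_congr rfl fun m _ => ?_
    rw [dp_sum]
    refine Finset.sum_congr rfl fun l _ => ?_
    rw [Matrix.smul_mulVec, dotProduct_smul, hPjQ, smul_eq_mul]
  have hq2 : ∑ i, ∑ j, B i j * Sg i j
      = ∑ m, ∑ l, w m * w l * (min (k m) (k l) : ℝ) := by
    rw [tr_form, hB, hPdef, hTrmat Sg S hSg hS hSS k hk X hnest hX w]
  rw [hc2, hq2, ← Finset.sum_add_distrib]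
  refine Finset.sum_congr rfl fun m _ => ?_
  rw [← Finset.sum_add_distrib]
  refine Finset.sum_congr rfl fun l _ => ?_
  rw [mul_add]
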